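/- Basic size bound in the Unchaining FBC: if t is initial (closed and without explicit substitutions) and d : t ↦of* u, then |u|_b ≤ |d|_om − |d|_oec, where |d|_om and |d|_oec are the numbers of multiplicative and of chain exponential steps in d. In particular, |d|_oec ≤ |d|_om. -/

import Mathlib

/-- Terms with explicit substitutions (ES): t ::= x | a | λx.t | t u | t[x←u]. -/
inductive ETerm : Type
  | var : ℕ → ETerm
  | sym : ℕ → ETerm
  | lam : ℕ → ETerm → ETerm
  | app : ETerm → ETerm → ETerm
  | esub : ETerm → ℕ → ETerm → ETerm

/-- Free variables (symbols do not count; both λx and [x←·] bind x). -/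
def ETerm.fv : ETerm → Finset ℕ
  | .var x => {x}
  | .sym _ => ∅
  | .lam x t => ETerm.fv t \ {x}
  | .app t u => ETerm.fv t ∪ ETerm.fv u
  | .esub t x u => (ETerm.fv t \ {x}) ∪ ETerm.fv u

/-- A term is closed when it has no free variables. -/
def ETerm.Closed (t : ETerm) : Prop := ETerm.fv t = ∅

/-- Capture-avoiding substitution t{x:=u} (under the convention that bound
variables are renamed apart). -/
def ETerm.subst (x : ℕ) (u : ETerm) : ETerm → ETerm
  | .var y => if y = x then u else .var y
  | .sym a => .sym a
  | .lam y t => if y = x then .lam y t else .lam y (ETerm.subst x u t)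
  | .app t s => .app (ETerm.subst x u t) (ETerm.subst x u s)
  | .esub t y s => if y = x then .esub t y (ETerm.subst x u s)
                   else .esub (ETerm.subst x u t) y (ETerm.subst x u s)

/-- Terms without explicit substitutions. -/
def ETerm.NoES : ETerm → Prop
  | .var _ => True
  | .sym _ => True
  | .lam _ t => ETerm.NoES t
  | .app t u => ETerm.NoES t ∧ ETerm.NoES u
  | .esub _ _ _ => False

/-- Substitution contexts L ::= ⟨·⟩ | L[x←t]. -/
inductive SCtx : Type
  | hole : SCtx
  | sub : SCtx → ℕ → ETerm → SCtx

/-- Plugging a term in a substitution context. -/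
def SCtx.plug : SCtx → ETerm → ETerm
  | .hole, t => t
  | .sub L x u, t => ETerm.esub (SCtx.plug L t) x u

mutual
  /-- Inerts of the Explicit FBC: A ::= a | L⟨A⟩ L'⟨f⟩. -/
  inductive EInert : ETerm → Prop
    | sym : ∀ a : ℕ, EInert (ETerm.sym a)
    | app : ∀ (L L' : SCtx) (A f : ETerm), EInert A → EFireball f →
        EInert (ETerm.app (SCtx.plug L A) (SCtx.plug L' f))
  /-- Fireballs of the Explicit FBC: f ::= v | A, values v ::= λx.t. -/
  inductive EFireball : ETerm → Prop
    | val : ∀ (x : ℕ) (t : ETerm), EFireball (ETerm.lam x t)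
    | inert : ∀ t : ETerm, EInert t → EFireball t
end

/-- Shallow contexts S ::= ⟨·⟩ | S t | t S | S[x←t]. -/
inductive ShCtx : Type
  | hole : ShCtx
  | appL : ShCtx → ETerm → ShCtx
  | appR : ETerm → ShCtx → ShCtx
  | sub : ShCtx → ℕ → ETerm → ShCtx

/-- Plugging a term in a shallow context. -/
def ShCtx.plug : ShCtx → ETerm → ETerm
  | .hole, t => t
  | .appL S u, t => ETerm.app (ShCtx.plug S t) u
  | .appR u S, t => ETerm.app u (ShCtx.plug S t)
  | .sub S x u, t => ETerm.esub (ShCtx.plug S t) x u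

/-- Plugging a shallow context in a shallow context: `ShCtx.comp S C` is S⟨C⟩. -/
def ShCtx.comp : ShCtx → ShCtx → ShCtx
  | .hole, C => C
  | .appL S u, C => .appL (ShCtx.comp S C) u
  | .appR u S, C => .appR u (ShCtx.comp S C)
  | .sub S x u, C => .sub (ShCtx.comp S C) x u

/-- Substitution on shallow contexts, homomorphic, leaving the hole unchanged. -/
def ShCtx.substS (x : ℕ) (w : ETerm) : ShCtx → ShCtx
  | .hole => .hole
  | .appL S u => .appL (ShCtx.substS x w S) (ETerm.subst x w u)
  | .appR u S => .appR (ETerm.subst x w u) (ShCtx.substS x w S)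
  | .sub S y u => .sub (ShCtx.substS x w S) y (ETerm.subst x w u)

/-- The unfolding t↓ of an ES-term (the result contains no ES). -/
def unfoldE : ETerm → ETerm
  | .var x => .var x
  | .sym a => .sym a
  | .lam x t => .lam x (unfoldE t)
  | .app t u => .app (unfoldE t) (unfoldE u)
  | .esub t x u => ETerm.subst x (unfoldE u) (unfoldE t)

/-- Relative unfolding t↓_S of a term t with respect to a shallow context S. -/
def relUnf : ShCtx → ETerm → ETerm
  | .hole, t => unfoldE t
  | .appL S _, t => relUnf S t
  | .appR _ S, t => relUnf S t
  | .sub S x u, t => ETerm.subst x (unfoldE u) (relUnf S t)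

/-- Evaluable shallow contexts: ⟨·⟩ is evaluable; if S is evaluable and t↓ is a
fireball then S t is evaluable; if S is evaluable then t S is evaluable; if
S{x:=t↓} is evaluable and t↓ is a fireball then S[x←t] is evaluable. -/
inductive Evaluable : ShCtx → Prop
  | hole : Evaluable ShCtx.hole
  | appL : ∀ (S : ShCtx) (t : ETerm), Evaluable S → EFireball (unfoldE t) →
      Evaluable (ShCtx.appL S t)
  | appR : ∀ (S : ShCtx) (t : ETerm), Evaluable S → Evaluable (ShCtx.appR t S)
  | sub : ∀ (S : ShCtx) (x : ℕ) (t : ETerm),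
      Evaluable (ShCtx.substS x (unfoldE t) S) → EFireball (unfoldE t) →
      Evaluable (ShCtx.sub S x t)

/-- Substitution contexts are shallow contexts. -/
def SCtx.toSh : SCtx → ShCtx
  | .hole => .hole
  | .sub L x t => .sub (SCtx.toSh L) x t

/-- A shallow context is applicative when its hole is applied to a subterm,
i.e. S = S'⟨L u⟩. -/
def ApplicativeCtx (S : ShCtx) : Prop :=
  ∃ (S' : ShCtx) (L : SCtx) (u : ETerm),
    S = ShCtx.comp S' (ShCtx.appL (SCtx.toSh L) u)

/-- A shallow context is useful when it is evaluable and applicative. -/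
def Useful (S : ShCtx) : Prop := Evaluable S ∧ ApplicativeCtx S

/-- Identity contexts I ::= ⟨·⟩ | I⟨x⟩[x←I'] | I[x←t]. -/
inductive ICtx : Type
  | hole : ICtx
  | sub : ICtx → ℕ → ICtx → ICtx   -- I⟨x⟩[x←I'], the hole being that of I'
  | subT : ICtx → ℕ → ETerm → ICtx -- I[x←t]

/-- Plugging in an identity context. -/
def ICtx.plug : ICtx → ETerm → ETerm
  | .hole, t => t
  | .sub I x I', t => ETerm.esub (ICtx.plug I (ETerm.var x)) x (ICtx.plug I' t)
  | .subT I x u, t => ETerm.esub (ICtx.plug I t) x u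

/-- Chain contexts C ::= S⟨x⟩[x←I] | C⟨x⟩[x←I] | S⟨C⟩. -/
inductive CCtx : Type
  | base : ShCtx → ℕ → ICtx → CCtx   -- S⟨x⟩[x←I], the hole being that of I
  | cons : CCtx → ℕ → ICtx → CCtx    -- C⟨x⟩[x←I], the hole being that of I
  | under : ShCtx → CCtx → CCtx      -- S⟨C⟩

/-- Plugging in a chain context. -/
def CCtx.plug : CCtx → ETerm → ETerm
  | .base S x I, t => ETerm.esub (ShCtx.plug S (ETerm.var x)) x (ICtx.plug I t)
  | .cons C x I, t => ETerm.esub (CCtx.plug C (ETerm.var x)) x (ICtx.plug I t)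
  | .under S C, t => ShCtx.plug S (CCtx.plug C t)

/-- The chain-starting (shallow) context C↾x of a chain context C:
(S⟨y⟩[y←I])↾x := S[y←I⟨x⟩]; (C⟨y⟩[y←I])↾x := (C↾y)[y←I⟨x⟩]; (S⟨C⟩)↾x := S⟨C↾x⟩. -/
def CCtx.start : CCtx → ℕ → ShCtx
  | .base S y I, x => ShCtx.sub S y (ICtx.plug I (ETerm.var x))
  | .cons C y I, x => ShCtx.sub (CCtx.start C y) y (ICtx.plug I (ETerm.var x))
  | .under S C, x => ShCtx.comp S (CCtx.start C x)

/-- Multiplicative rule ↦om: S⟨L⟨λx.t⟩ u⟩ ↦om S⟨L⟨t[x←u]⟩⟩ if S⟨⟨·⟩ u⟩ is useful. -/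
inductive StepOM : ETerm → ETerm → Prop
  | fire : ∀ (S : ShCtx) (L : SCtx) (x : ℕ) (t u : ETerm),
      Useful (ShCtx.comp S (ShCtx.appL ShCtx.hole u)) →
      StepOM (ShCtx.plug S (ETerm.app (SCtx.plug L (ETerm.lam x t)) u))
             (ShCtx.plug S (SCtx.plug L (ETerm.esub t x u)))

/-- Shallow exponential rule ↦oes: S⟨S'⟨x⟩[x←L⟨v⟩]⟩ ↦oes S⟨L⟨S'⟨v⟩[x←v]⟩⟩ (v a value)
if S⟨S'[x←L⟨v⟩]⟩ is useful. -/
inductive StepOES : ETerm → ETerm → Prop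
  | fire : ∀ (S S' : ShCtx) (L : SCtx) (x y : ℕ) (s : ETerm),
      Useful (ShCtx.comp S (ShCtx.sub S' x (SCtx.plug L (ETerm.lam y s)))) →
      StepOES (ShCtx.plug S (ETerm.esub (ShCtx.plug S' (ETerm.var x)) x
                 (SCtx.plug L (ETerm.lam y s))))
              (ShCtx.plug S (SCtx.plug L (ETerm.esub (ShCtx.plug S' (ETerm.lam y s)) x
                 (ETerm.lam y s))))

/-- Chain exponential rule ↦oec: S⟨C⟨x⟩[x←L⟨v⟩]⟩ ↦oec S⟨L⟨C⟨v⟩[x←v]⟩⟩ (v a value)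
if S⟨(C↾x)[x←L⟨v⟩]⟩ is useful. -/
inductive StepOEC : ETerm → ETerm → Prop
  | fire : ∀ (S : ShCtx) (C : CCtx) (L : SCtx) (x y : ℕ) (s : ETerm),
      Useful (ShCtx.comp S (ShCtx.sub (CCtx.start C x) x (SCtx.plug L (ETerm.lam y s)))) →
      StepOEC (ShCtx.plug S (ETerm.esub (CCtx.plug C (ETerm.var x)) x
                 (SCtx.plug L (ETerm.lam y s))))
              (ShCtx.plug S (SCtx.plug L (ETerm.esub (CCtx.plug C (ETerm.lam y s)) x
                 (ETerm.lam y s))))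

/-- ↦of := ↦om ∪ ↦oes ∪ ↦oec. -/
def StepOF (t u : ETerm) : Prop := StepOM t u ∨ StepOES t u ∨ StepOEC t u

/-- `isVarSpine u` holds iff u has the form L⟨y⟩ for a substitution context L and
variable y. -/
def isVarSpine : ETerm → Bool
  | .var _ => true
  | .esub t _ _ => isVarSpine t
  | _ => false

/-- An explicit substitution t[x←u] is basic when u = L⟨y⟩; the basic size |t|_b
is the number of basic explicit substitutions in t. -/
def basicSize : ETerm → ℕ
  | .var _ => 0
  | .sym _ => 0
  | .lam _ t => basicSize t
  | .app t u => basicSize t + basicSize u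
  | .esub t _ u => basicSize t + basicSize u + (if isVarSpine u then 1 else 0)

/-- Derivations of the Unchaining FBC: `ODeriv m s c t u` means t ↦of* u with
exactly m multiplicative (↦om), s shallow exponential (↦oes) and c chain
exponential (↦oec) steps. -/
inductive ODeriv : ℕ → ℕ → ℕ → ETerm → ETerm → Prop
  | refl : ∀ t, ODeriv 0 0 0 t t
  | om : ∀ {t u w : ETerm} {m s c : ℕ},
      StepOM t u → ODeriv m s c u w → ODeriv (m+1) s c t w
  | oes : ∀ {t u w : ETerm} {m s c : ℕ},
      StepOES t u → ODeriv m s c u w → ODeriv m (s+1) c t w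
  | oec : ∀ {t u w : ETerm} {m s c : ℕ},
      StepOEC t u → ODeriv m s c u w → ODeriv m s (c+1) t w

/-! ### Auxiliary definitions and lemmas -/

/-- Every lambda body is ES-free. -/
def LamNoES : ETerm → Prop
  | .var _ => True
  | .sym _ => True
  | .lam _ t => ETerm.NoES t
  | .app t u => LamNoES t ∧ LamNoES u
  | .esub t _ u => LamNoES t ∧ LamNoES u

lemma noES_bs : ∀ t : ETerm, ETerm.NoES t → basicSize t = 0 := by
  intro t h
  induction t with
  | var _ => rfl
  | sym _ => rfl
  | lam _ t ih => simpa [basicSize] using ih h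
  | app t u iht ihu =>
    obtain ⟨h1, h2⟩ := h
    simp [basicSize, iht h1, ihu h2]
  | esub t x u _ _ => exact absurd h id

lemma noES_lamNoES : ∀ t : ETerm, ETerm.NoES t → LamNoES t := by
  intro t h
  induction t with
  | var _ => trivial
  | sym _ => trivial
  | lam _ t _ => exact h
  | app t u iht ihu => exact ⟨iht h.1, ihu h.2⟩
  | esub t x u _ _ => exact absurd h id

lemma ivs_sc (L : SCtx) (t : ETerm) : isVarSpine (SCtx.plug L t) = isVarSpine t := by
  induction L with
  | hole => rfl
  | sub L x u ih => simpa [SCtx.plug, isVarSpine] using ih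

/-- Basic size of a substitution context. -/
def bsSc : SCtx → ℕ
  | .hole => 0
  | .sub L _ u => bsSc L + basicSize u + (if isVarSpine u then 1 else 0)

lemma bs_sc (L : SCtx) (t : ETerm) :
    basicSize (SCtx.plug L t) = bsSc L + basicSize t := by
  induction L with
  | hole => simp [SCtx.plug, bsSc]
  | sub L x u ih => simp [SCtx.plug, bsSc, basicSize, ih]; omega

/-- Basic size of a shallow context. -/
def bsSh : ShCtx → ℕ
  | .hole => 0
  | .appL S u => bsSh S + basicSize u
  | .appR u S => basicSize u + bsSh S
  | .sub S _ u => bsSh S + basicSize u + (if isVarSpine u then 1 else 0)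

lemma bs_sh (S : ShCtx) (t : ETerm) :
    basicSize (ShCtx.plug S t) = bsSh S + basicSize t := by
  induction S with
  | hole => simp [ShCtx.plug, bsSh]
  | appL S u ih => simp [ShCtx.plug, bsSh, basicSize, ih]; omega
  | appR u S ih => simp [ShCtx.plug, bsSh, basicSize, ih]; omega
  | sub S x u ih => simp [ShCtx.plug, bsSh, basicSize, ih]; omega

lemma ivs_ic_var (I : ICtx) (z : ℕ) : isVarSpine (ICtx.plug I (ETerm.var z)) = true := by
  induction I generalizing z with
  | hole => rfl
  | sub I x I' ih ih' => simpa [ICtx.plug, isVarSpine] using ih x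
  | subT I x u ih => simpa [ICtx.plug, isVarSpine] using ih z

/-- Key inequality for identity contexts. -/
lemma ictx_key (I : ICtx) (z : ℕ) (t : ETerm) (h0 : basicSize t = 0)
    (hs : isVarSpine t = false) :
    basicSize (ICtx.plug I t) + (if isVarSpine (ICtx.plug I t) then 1 else 0)
      ≤ basicSize (ICtx.plug I (ETerm.var z)) := by
  induction I generalizing z with
  | hole => simp [ICtx.plug, basicSize, h0, hs]
  | sub I x I' ih ih' =>
    have h1 := ih' z
    simp [ICtx.plug, basicSize, isVarSpine, ivs_ic_var I x, ivs_ic_var I' z]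
    omega
  | subT I x u ih =>
    have h1 := ih z
    simp [ICtx.plug, basicSize, isVarSpine] at *
    omega

/-- Key inequality for chain contexts: plugging a value instead of a variable
strictly decreases the basic size. -/
lemma cctx_key (C : CCtx) (z : ℕ) (t : ETerm) (h0 : basicSize t = 0)
    (hs : isVarSpine t = false) :
    basicSize (CCtx.plug C t) + 1 ≤ basicSize (CCtx.plug C (ETerm.var z)) := by
  induction C generalizing z with
  | base S x I =>
    have h1 := ictx_key I z t h0 hs
    simp [CCtx.plug, basicSize, ivs_ic_var I z]
    omega
  | cons C x I ih =>
    have h1 := ictx_key I z t h0 hs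
    simp [CCtx.plug, basicSize, ivs_ic_var I z]
    omega
  | under S C ih =>
    have h1 := ih z
    simp [CCtx.plug, bs_sh]
    omega

/-! ### LamNoES and contexts -/

def PSc : SCtx → Prop
  | .hole => True
  | .sub L _ u => PSc L ∧ LamNoES u

lemma lnes_sc (L : SCtx) (t : ETerm) :
    LamNoES (SCtx.plug L t) ↔ PSc L ∧ LamNoES t := by
  induction L with
  | hole => simp [SCtx.plug, PSc]
  | sub L x u ih => simp [SCtx.plug, PSc, LamNoES, ih]; tauto

def PSh : ShCtx → Prop
  | .hole => True
  | .appL S u => PSh S ∧ LamNoES u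
  | .appR u S => LamNoES u ∧ PSh S
  | .sub S _ u => PSh S ∧ LamNoES u

lemma lnes_sh (S : ShCtx) (t : ETerm) :
    LamNoES (ShCtx.plug S t) ↔ PSh S ∧ LamNoES t := by
  induction S with
  | hole => simp [ShCtx.plug, PSh]
  | appL S u ih => simp [ShCtx.plug, PSh, LamNoES, ih]; tauto
  | appR u S ih => simp [ShCtx.plug, PSh, LamNoES, ih]; tauto
  | sub S x u ih => simp [ShCtx.plug, PSh, LamNoES, ih]; tauto

def PIc : ICtx → Prop
  | .hole => True
  | .sub I _ I' => PIc I ∧ PIc I'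
  | .subT I _ u => PIc I ∧ LamNoES u

lemma lnes_ic (I : ICtx) (t : ETerm) :
    LamNoES (ICtx.plug I t) ↔ PIc I ∧ LamNoES t := by
  induction I generalizing t with
  | hole => simp [ICtx.plug, PIc]
  | sub I x I' ih ih' =>
    simp [ICtx.plug, PIc, LamNoES, ih, ih']
    tauto
  | subT I x u ih => simp [ICtx.plug, PIc, LamNoES, ih]; tauto

def PCc : CCtx → Prop
  | .base S _ I => PSh S ∧ PIc I
  | .cons C _ I => PCc C ∧ PIc I
  | .under S C => PSh S ∧ PCc C

lemma lnes_cc (C : CCtx) (t : ETerm) :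
    LamNoES (CCtx.plug C t) ↔ PCc C ∧ LamNoES t := by
  induction C generalizing t with
  | base S x I => simp [CCtx.plug, PCc, LamNoES, lnes_sh, lnes_ic]; tauto
  | cons C x I ih => simp [CCtx.plug, PCc, LamNoES, lnes_ic, ih]; tauto
  | under S C ih => simp [CCtx.plug, PCc, lnes_sh, ih]; tauto

/-! ### Step lemmas -/

lemma step_om {t u : ETerm} (h : StepOM t u) (hl : LamNoES t) :
    LamNoES u ∧ basicSize u ≤ basicSize t + 1 := by
  cases h with
  | fire S L x b u' hu =>
    rw [lnes_sh] at hl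
    obtain ⟨hS, hb, hu'⟩ := hl
    rw [lnes_sc] at hb
    obtain ⟨hL, hlam⟩ := hb
    constructor
    · rw [lnes_sh, lnes_sc]
      exact ⟨hS, hL, noES_lamNoES b hlam, hu'⟩
    · simp only [bs_sh, bs_sc, basicSize, noES_bs b hlam]
      split <;> omega

lemma step_oes {t u : ETerm} (h : StepOES t u) (hl : LamNoES t) :
    LamNoES u ∧ basicSize u ≤ basicSize t := by
  cases h with
  | fire S S' L x y s hu =>
    rw [lnes_sh] at hl
    obtain ⟨hS, h1, h2⟩ := hl
    rw [lnes_sh] at h1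
    rw [lnes_sc] at h2
    obtain ⟨hL, hs⟩ := h2
    constructor
    · rw [lnes_sh, lnes_sc]
      refine ⟨hS, hL, ?_, hs⟩
      rw [lnes_sh]
      exact ⟨h1.1, hs⟩
    · simp only [bs_sh, bs_sc, basicSize, noES_bs s hs, ivs_sc, isVarSpine, Bool.false_eq_true, ↓reduceIte]
      omega

lemma step_oec {t u : ETerm} (h : StepOEC t u) (hl : LamNoES t) :
    LamNoES u ∧ basicSize u + 1 ≤ basicSize t := by
  cases h with
  | fire S C L x y s hu =>
    rw [lnes_sh] at hl
    obtain ⟨hS, h1, h2⟩ := hl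
    rw [lnes_cc] at h1
    rw [lnes_sc] at h2
    obtain ⟨hL, hs⟩ := h2
    constructor
    · rw [lnes_sh, lnes_sc]
      refine ⟨hS, hL, ?_, hs⟩
      rw [lnes_cc]
      exact ⟨h1.1, hs⟩
    · have key := cctx_key C x (ETerm.lam y s) (by simpa [basicSize] using noES_bs s hs) rfl
      simp only [bs_sh, bs_sc, basicSize, noES_bs s hs, ivs_sc, isVarSpine, Bool.false_eq_true, ↓reduceIte] at *
      omega

lemma main_ind {t u : ETerm} {m s c : ℕ} (d : ODeriv m s c t u) (hl : LamNoES t) :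
    LamNoES u ∧ basicSize u + c ≤ basicSize t + m := by
  induction d with
  | refl t => exact ⟨hl, by omega⟩
  | om hst d ih =>
    obtain ⟨h1, h2⟩ := step_om hst hl
    obtain ⟨h3, h4⟩ := ih h1
    exact ⟨h3, by omega⟩
  | oes hst d ih =>
    obtain ⟨h1, h2⟩ := step_oes hst hl
    obtain ⟨h3, h4⟩ := ih h1
    exact ⟨h3, by omega⟩
  | oec hst d ih =>
    obtain ⟨h1, h2⟩ := step_oec hst hl
    obtain ⟨h3, h4⟩ := ih h1
    exact ⟨h3, by omega⟩

/-- basic size bound in the Unchaining FBC: if t is initial (closed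
and without ES) and d : t ↦of* u, then |u|_b ≤ |d|_om − |d|_oec (stated over ℕ as
|u|_b + |d|_oec ≤ |d|_om); in particular |d|_oec ≤ |d|_om. -/
theorem basic_size_bound (t u : ETerm) (m s c : ℕ)
    (hc : ETerm.Closed t) (hno : ETerm.NoES t) (d : ODeriv m s c t u) :
    basicSize u + c ≤ m ∧ c ≤ m := by
  have h0 : basicSize t = 0 := noES_bs t hno
  have := (main_ind d (noES_lamNoES t hno)).2
  constructor <;> omega
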